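/- For every n ∈ ℕ, the n × n square {(a,b) ∈ ℤ² : 0 ≤ a < n and 0 ≤ b < n} is foldable with zero error: there exists a Turning Machine with n² monomers, initial positions pos(m_i)=(i,0) and suitable initial integer states, that computes a target configuration whose states are all 0 and whose set of monomer positions is exactly the n × n square. -/

import Mathlib

namespace TuringMachineFolding

/-- Points of the triangular grid, coordinatised by `ℤ × ℤ`. -/
abbrev Pt : Type := ℤ × ℤ

/-- The six triangular-grid unit vectors `x, y, w, -x, -y, -w`. -/
def unitVecs : Set Pt :=
  {((1 : ℤ), (0 : ℤ)), (0, 1), (-1, 1), (-1, 0), (0, -1), (1, -1)}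

/-- Anticlockwise rotation by `π/3`: the linear map with `ρ(1,0) = (0,1)`, `ρ(0,1) = (-1,1)`. -/
def rot : Pt → Pt := fun p => (-p.2, p.1 + p.2)

/-- Clockwise rotation by `π/3`, the inverse of `rot`. -/
def rotInv : Pt → Pt := fun p => (p.1 + p.2, -p.1)

/-- `rot` as a permutation of the grid, so that integer powers `rotE ^ t` make sense. -/
def rotE : Equiv.Perm Pt where
  toFun := rot
  invFun := rotInv
  left_inv := by
    rintro ⟨a, b⟩
    simp only [rot, rotInv, Prod.mk.injEq]
    constructor <;> ring
  right_inv := by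
    rintro ⟨a, b⟩
    simp only [rot, rotInv, Prod.mk.injEq]
    constructor <;> ring

/-- Scalar multiple of a grid vector. -/
def zsmulPt (m : ℤ) (p : Pt) : Pt := (m * p.1, m * p.2)

/-- A configuration of a Turning Machine of length `n`: states and positions of the monomers
`m_0, …, m_{n-1}` (indices `≥ n` carry irrelevant junk values), such that `pos m_0 = (0,0)`,
consecutive positions differ by one of the six unit vectors, and positions are pairwise
distinct. -/
structure Config (n : ℕ) where
  st : ℕ → ℤ
  pos : ℕ → Pt
  pos_zero : pos 0 = (0, 0)
  step_unit : ∀ i, i + 1 < n → pos (i + 1) - pos i ∈ unitVecs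
  pos_inj : ∀ i < n, ∀ j < n, pos i = pos j → i = j

/-- The direction of monomer `m_i` (meaningful for `i + 1 < n`). -/
def dir {n : ℕ} (c : Config n) (i : ℕ) : Pt := c.pos (i + 1) - c.pos i

/-- The translation vector applied to the head of `m_i` when the turning rule fires at `m_i`:
`ρ²(d_i)` for a positive state, `ρ⁻²(d_i)` for a negative state. -/
def delta {n : ℕ} (c : Config n) (i : ℕ) : Pt :=
  if 0 < c.st i then rot (rot (dir c i)) else rotInv (rotInv (dir c i))

/-- The state sequence after applying the turning rule at monomer `i`. -/
def nextSt {n : ℕ} (c : Config n) (i : ℕ) : ℕ → ℤ := fun j =>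
  if j = i then (if 0 < c.st i then c.st i - 1 else c.st i + 1) else c.st j

/-- The position sequence after applying the turning rule at monomer `i`. -/
def nextPos {n : ℕ} (c : Config n) (i : ℕ) : ℕ → Pt := fun j =>
  if i < j then c.pos j + delta c i else c.pos j

/-- The turning rule applied at monomer `i` transforms `c` into `c'`.  The requirement that
`c'` is again a `Config` (pairwise distinct positions) encodes that the move is not blocked. -/
def StepAt {n : ℕ} (c : Config n) (i : ℕ) (c' : Config n) : Prop :=
  i < n ∧ c.st i ≠ 0 ∧ (∀ j < n, c'.st j = nextSt c i j) ∧ (∀ j < n, c'.pos j = nextPos c i j)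

/-- The turning rule is applicable to monomer `i` in configuration `c`. -/
def Applicable {n : ℕ} (c : Config n) (i : ℕ) : Prop := ∃ c', StepAt c i c'

/-- Monomer `i` is blocked in `c`: nonzero state, but no applicable rule. -/
def Blocked {n : ℕ} (c : Config n) (i : ℕ) : Prop :=
  i < n ∧ c.st i ≠ 0 ∧ ¬ Applicable c i

/-- One asynchronous step of the machine. -/
def Step {n : ℕ} (c c' : Config n) : Prop := ∃ i, StepAt c i c'

/-- `c` is reachable from `c₀` by a finite sequence of rule applications. -/
def Reachable {n : ℕ} (c₀ c : Config n) : Prop := Relation.ReflTransGen Step c₀ c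

/-- No rule is applicable in `c`. -/
def Terminal {n : ℕ} (c : Config n) : Prop := ∀ i, ¬ Applicable c i

/-- `c` is permanently blocked: some state is nonzero but no monomer admits an applicable rule. -/
def PermBlocked {n : ℕ} (c : Config n) : Prop :=
  (∃ i < n, c.st i ≠ 0) ∧ Terminal c

/-- The Turning Machine with initial configuration `c₀` computes the target configuration `ct`:
every maximal sequence of rule applications from `c₀` is finite and ends in `ct`
(configurations are compared on the meaningful indices `< n`). -/
def Computes {n : ℕ} (c₀ ct : Config n) : Prop :=
  (¬ ∃ f : ℕ → Config n, f 0 = c₀ ∧ ∀ k, Step (f k) (f (k + 1))) ∧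
  ∀ c, Reachable c₀ c → Terminal c → ∀ i < n, c.st i = ct.st i ∧ c.pos i = ct.pos i

/-- The initial configuration with monomers on the x-axis, `pos m_i = (i,0)`, and
initial states `s₀`. -/
def mkInit (n : ℕ) (s₀ : ℕ → ℤ) : Config n where
  st := s₀
  pos := fun i => ((i : ℤ), 0)
  pos_zero := by simp
  step_unit := by
    intro i _
    have h : (((i + 1 : ℕ) : ℤ), (0 : ℤ)) - (((i : ℕ) : ℤ), (0 : ℤ)) = ((1 : ℤ), (0 : ℤ)) := by
      simp only [Prod.mk_sub_mk, Prod.mk.injEq]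
      constructor <;> push_cast <;> ring
    rw [h]
    simp [unitVecs]
  pos_inj := by
    intro i _ j _ h
    have h1 : ((i : ℕ) : ℤ) = ((j : ℕ) : ℤ) := congrArg Prod.fst h
    exact_mod_cast h1

/-- The initial configuration of the line-rotating Turning Machine `L^σ_n`:
`pos m_i = (i,0)`, states `σ` except the last monomer which has state `0`. -/
def lineInit (n : ℕ) (σ : ℤ) : Config n :=
  mkInit n (fun i => if i + 1 = n then 0 else σ)

/-- `Δs`: the number of rule applications made to monomer `i` on the way from `c₀` to `c`
(each application changes the state by one, towards `0`). -/
def dS {n : ℕ} (c₀ c : Config n) (i : ℕ) : ℤ := |c₀.st i - c.st i|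

/-- The set of positions occupied by a configuration. -/
def posSet {n : ℕ} (c : Config n) : Set Pt := {q | ∃ i < n, c.pos i = q}


/-- Adjacency on the triangular grid. -/
def Adj (p q : Pt) : Prop := q - p ∈ unitVecs

/-- The graph induced by the edge relation `E` on the set `S` is connected. -/
def ConnectedIn (E : Pt → Pt → Prop) (S : Set Pt) : Prop :=
  ∀ p ∈ S, ∀ q ∈ S, Relation.ReflTransGen (fun a b => a ∈ S ∧ b ∈ S ∧ E a b) p q

/-- A shape: a finite subset of the grid whose induced graph is connected. -/
def IsShape (S : Set Pt) : Prop := S.Finite ∧ ConnectedIn Adj S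

/-- `y`-monotone shape: the points of each row form a set of consecutive integers. -/
def YMonotone (S : Set Pt) : Prop :=
  ∀ j x₁ x₂ x₃ : ℤ, x₁ ≤ x₂ → x₂ ≤ x₃ → (x₁, j) ∈ S → (x₃, j) ∈ S → (x₂, j) ∈ S

/-- Adjacency along the `x` and `y` axes only. -/
def AdjXY (p q : Pt) : Prop :=
  q - p ∈ ({((1 : ℤ), (0 : ℤ)), (-1, 0), (0, 1), (0, -1)} : Set Pt)

/-- `xy`-connected: connected using only `±x` and `±y` edges. -/
def XYConnected (S : Set Pt) : Prop := ConnectedIn AdjXY S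

/-- The perimeter of a shape: its points having a neighbour outside the shape. -/
def perimeter (S : Set Pt) : Set Pt := {p ∈ S | ∃ v ∈ unitVecs, p + v ∉ S}

/-- Translation of a set of points. -/
def translate (t : Pt) (S : Set Pt) : Set Pt := (fun p => p + t) '' S

/-- The cardinality of the symmetric difference of two sets of points. -/
noncomputable def symmDiffCard (A B : Set Pt) : ℕ := ((A \ B) ∪ (B \ A)).ncard

/-- Error of a configuration w.r.t. a shape: the least cardinality, over all translations `t`,
of the symmetric difference of `S + t` and the set of monomer positions. -/
noncomputable def foldError {n : ℕ} (S : Set Pt) (c : Config n) : ℕ :=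
  sInf {m | ∃ t : Pt, symmDiffCard (translate t S) (posSet c) = m}

/-- The allowed steps of a `yw`-chain. -/
def ywSteps : Set Pt := {((0 : ℤ), (1 : ℤ)), (-1, 1)}

/-- `c 0, …, c (k-1)` is a `yw`-separator of the `y`-monotone shape `S`: a `yw`-chain inside `S`
from the bottommost row of `S` to the topmost row of `S`. -/
def IsYWSep (S : Set Pt) (k : ℕ) (c : ℕ → Pt) : Prop :=
  0 < k ∧ (∀ ℓ, ℓ + 1 < k → c (ℓ + 1) - c ℓ ∈ ywSteps) ∧ (∀ ℓ < k, c ℓ ∈ S) ∧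
    (∀ p ∈ S, (c 0).2 ≤ p.2) ∧ (∀ p ∈ S, p.2 ≤ (c (k - 1)).2)

/-- The shape `S` scaled by a factor `2`. -/
def scale2 (S : Set Pt) : Set Pt :=
  {q | ∃ p ∈ S, ∃ a b : ℤ, (a = 0 ∨ a = 1) ∧ (b = 0 ∨ b = 1) ∧ q = (2 * p.1 + a, 2 * p.2 + b)}

/-- The right boundary of a shape: the rightmost point of each nonempty row. -/
def rightBdry (S : Set Pt) : Set Pt := {p ∈ S | ∀ q ∈ S, q.2 = p.2 → q.1 ≤ p.1}

/-- The left boundary of a shape: the leftmost point of each nonempty row. -/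
def leftBdry (S : Set Pt) : Set Pt := {p ∈ S | ∀ q ∈ S, q.2 = p.2 → p.1 ≤ q.1}

/-- The "almost rectangle" `R_{k'}` from the definition of the `1`-gap spiral. -/
def spiralRing (k : ℤ) : Set Pt :=
  (({p : Pt | (p.2 = 2 * k ∨ p.2 = -(2 * k)) ∧ -(2 * k) ≤ p.1 ∧ p.1 ≤ 2 * k - 1} ∪
      {p : Pt | (p.1 = -(2 * k) ∨ p.1 = 2 * k - 1) ∧ -(2 * k) ≤ p.2 ∧ p.2 ≤ 2 * k}) ∪
      {(2 * k - 2, -(2 * k) + 2), (2 * k, -(2 * k)), (2 * k + 1, -(2 * k))}) \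
    {(2 * k - 1, -(2 * k) + 1)}

/-- The `k`-turn `1`-gap spiral `S_k`. -/
def spiral (k : ℕ) : Set Pt := ⋃ j ∈ Finset.Icc 1 k, spiralRing (j : ℤ)

/-- The base turning numbers `t_i` of the inside-to-outside sequence. -/
def tIn (t0 : ℤ) : ℕ → ℤ
  | 0 => t0
  | i + 1 => tIn t0 i + (if (i + 1) % 2 = 0 then 2 else 1)

/-- The inside-to-outside turning number sequence
`T_in(t₀) = [t₀]¹,[t₁]²,…,[t_{4k}]^{4k+1}, t_{4k}`. -/
def TInList (k : ℕ) (t0 : ℤ) : List ℤ :=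
  ((List.range (4 * k + 1)).flatMap fun i => List.replicate (i + 1) (tIn t0 i)) ++ [tIn t0 (4 * k)]

/-- The base turning numbers `t_i` of the outside-to-inside sequence. -/
def tOut (t0 : ℤ) : ℕ → ℤ
  | 0 => t0
  | i + 1 => tOut t0 i - (if (i + 1) % 2 = 0 then 1 else 2)

/-- The outside-to-inside turning number sequence
`T_out(t₀) = t₀,[t₀]^{4k+1},[t₁]^{4k},…,[t_{4k}]¹`. -/
def TOutList (k : ℕ) (t0 : ℤ) : List ℤ :=
  t0 :: ((List.range (4 * k + 1)).flatMap fun i => List.replicate (4 * k + 1 - i) (tOut t0 i))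

/-- The cross shape with arm length `a`. -/
def cross (a : ℤ) : Set Pt :=
  {p : Pt | p.2 = 0 ∧ -a ≤ p.1 ∧ p.1 ≤ a} ∪ {p : Pt | p.1 = 0 ∧ -a ≤ p.2 ∧ p.2 ≤ a}

/-- A positive zig-zag path: pairwise distinct points with steps in `{x, -x, y, w}`. -/
def PosZigZag (n : ℕ) (p : ℕ → Pt) : Prop :=
  (∀ i < n, ∀ j < n, p i = p j → i = j) ∧
    ∀ i, i + 1 < n → p (i + 1) - p i ∈ ({((1 : ℤ), (0 : ℤ)), (-1, 0), (0, 1), (-1, 1)} : Set Pt)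

/-- A negative zig-zag path: pairwise distinct points with steps in `{x, -x, -y, -w}`. -/
def NegZigZag (n : ℕ) (p : ℕ → Pt) : Prop :=
  (∀ i < n, ∀ j < n, p i = p j → i = j) ∧
    ∀ i, i + 1 < n → p (i + 1) - p i ∈ ({((1 : ℤ), (0 : ℤ)), (-1, 0), (0, -1), (1, -1)} : Set Pt)


/-! ### Auxiliary development for `square_foldable`.

We fold the line into the square by a column-boustrophedon path (up column 0, one step
right, down column 1, one step right, up column 2, …), with turning numbers in `{0, 1, -2}`.
All intermediate directions have first coordinate `0` or `1`, and first coordinate `0`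
occurs only for finished vertical monomers inside a single column run; hence *every*
intermediate configuration is self-avoiding and no move is ever blocked. -/

/-- Initial states of the square-folding machine. -/
def sqInit (n : ℕ) (i : ℕ) : ℤ :=
  if i % n = n - 1 then 0 else if (i / n) % 2 = 0 then 1 else -2

/-- The current direction of monomer `i` as a function of its current state. -/
def dd (n : ℕ) (i : ℕ) (t : ℤ) : Pt :=
  if i % n = n - 1 then (1, 0)
  else if (i / n) % 2 = 0 then (if t = 0 then (0, 1) else (1, 0))
  else (if t = 0 then (0, -1) else if t = -1 then (1, -1) else (1, 0))

/-- Admissible states of monomer `i`. -/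
def BB (n : ℕ) (i : ℕ) (t : ℤ) : Prop :=
  if i % n = n - 1 then t = 0
  else if (i / n) % 2 = 0 then t = 0 ∨ t = 1
  else t = 0 ∨ t = -1 ∨ t = -2

/-- Position of monomer `j` determined by the current states. -/
def SS (n : ℕ) (t : ℕ → ℤ) (j : ℕ) : Pt := ∑ k ∈ Finset.range j, dd n k (t k)

lemma SS_succ (n : ℕ) (t : ℕ → ℤ) (j : ℕ) : SS n t (j + 1) = SS n t j + dd n j (t j) :=
  Finset.sum_range_succ _ _

lemma succ_div_mod_of_ne {n m : ℕ} (hn : 0 < n) (h : m % n ≠ n - 1) :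
    (m + 1) / n = m / n ∧ (m + 1) % n = m % n + 1 := by
  have hlt : m % n < n := Nat.mod_lt _ hn
  have h2 : m % n + 1 < n := by omega
  have hm := Nat.div_add_mod m n
  have e : m + 1 = (m % n + 1) + n * (m / n) := by omega
  constructor
  · rw [e, Nat.add_mul_div_left _ _ hn, Nat.div_eq_of_lt h2, Nat.zero_add]
  · rw [e, Nat.add_mul_mod_self_left, Nat.mod_eq_of_lt h2]

lemma succ_div_mod_of_eq {n m : ℕ} (hn : 0 < n) (h : m % n = n - 1) :
    (m + 1) / n = m / n + 1 ∧ (m + 1) % n = 0 := by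
  have hm := Nat.div_add_mod m n
  have e : m + 1 = n * (m / n + 1) := by rw [Nat.mul_add, Nat.mul_one]; omega
  constructor
  · rw [e, Nat.mul_div_cancel_left _ hn]
  · rw [e, Nat.mul_mod_right]

lemma BB_cases {n i : ℕ} {t : ℤ} (hB : BB n i t) :
    (i % n = n - 1 ∧ t = 0) ∨
      (i % n ≠ n - 1 ∧ (i / n) % 2 = 0 ∧ (t = 0 ∨ t = 1)) ∨
      (i % n ≠ n - 1 ∧ (i / n) % 2 ≠ 0 ∧ (t = 0 ∨ t = -1 ∨ t = -2)) := by
  unfold BB at hB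
  split_ifs at hB with h1 h2
  · exact Or.inl ⟨h1, hB⟩
  · exact Or.inr (Or.inl ⟨h1, h2, hB⟩)
  · exact Or.inr (Or.inr ⟨h1, h2, hB⟩)

lemma BB_zero (n k : ℕ) : BB n k 0 := by
  unfold BB; split_ifs <;> simp

lemma dd_mem_unitVecs (n i : ℕ) (t : ℤ) : dd n i t ∈ unitVecs := by
  unfold dd unitVecs
  split_ifs <;> simp

lemma dd_fst_cases (n i : ℕ) (t : ℤ) : (dd n i t).1 = 0 ∨ (dd n i t).1 = 1 := by
  unfold dd; split_ifs <;> simp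

lemma dd_vertical {n i : ℕ} {t : ℤ} (hB : BB n i t) (h : (dd n i t).1 = 0) :
    i % n ≠ n - 1 ∧ dd n i t = (0, if (i / n) % 2 = 0 then 1 else -1) := by
  rcases BB_cases hB with ⟨h1, h0⟩ | ⟨h1, h2, (h3 | h3)⟩ | ⟨h1, h2, (h3 | h3 | h3)⟩
  · simp [dd, h1] at h
  · exact ⟨h1, by simp [dd, h1, h2, h3]⟩
  · simp [dd, h1, h2, h3] at h
  · exact ⟨h1, by simp [dd, h1, h2, h3]⟩
  · simp [dd, h1, h2, h3] at h
  · simp [dd, h1, h2, h3] at h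

lemma SS_inj {n : ℕ} {t : ℕ → ℤ} (ht : ∀ i < n * n, BB n i (t i)) :
    ∀ j₁ < n * n, ∀ j₂ < n * n, SS n t j₁ = SS n t j₂ → j₁ = j₂ := by
  have key : ∀ j₁ j₂, j₁ < j₂ → j₂ ≤ n * n → SS n t j₁ ≠ SS n t j₂ := by
    intro j₁ j₂ hlt hle heq
    have hn : 0 < n := by
      rcases Nat.eq_zero_or_pos n with h | h
      · subst h; omega
      · exact h
    have h2 := Finset.sum_range_add_sum_Ico (fun k => dd n k (t k)) hlt.le
    rw [← SS, ← SS, heq] at h2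
    have hsum : ∑ k ∈ Finset.Ico j₁ j₂, dd n k (t k) = 0 := by
      exact add_eq_left.mp h2
    have hfst : ∀ k ∈ Finset.Ico j₁ j₂, (dd n k (t k)).1 = 0 := by
      have hs : ∑ k ∈ Finset.Ico j₁ j₂, (dd n k (t k)).1 = 0 := by
        rw [← Prod.fst_sum, hsum]; rfl
      refine (Finset.sum_eq_zero_iff_of_nonneg ?_).mp hs
      intro k _
      rcases dd_fst_cases n k (t k) with h | h <;> omega
    have hdiv : ∀ k, j₁ ≤ k → k < j₂ → k / n = j₁ / n := by
      intro k
      induction k with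
      | zero => intro hk1 _; rw [Nat.le_zero.mp hk1]
      | succ m ih =>
        intro hk1 hk2
        rcases Nat.eq_or_lt_of_le hk1 with heq' | hlt'
        · rw [← heq']
        · have hm1 : j₁ ≤ m := by omega
          have hm2 : m < j₂ := by omega
          have hv := dd_vertical (ht m (by omega)) (hfst m (Finset.mem_Ico.mpr ⟨hm1, hm2⟩))
          rw [(succ_div_mod_of_ne hn hv.1).1, ih hm1 hm2]
    have hconst : ∀ k ∈ Finset.Ico j₁ j₂, dd n k (t k) =
        ((0 : ℤ), if (j₁ / n) % 2 = 0 then (1 : ℤ) else -1) := by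
      intro k hk
      have hk' := Finset.mem_Ico.mp hk
      have hv := dd_vertical (ht k (by omega)) (hfst k hk)
      rw [hv.2, hdiv k hk'.1 hk'.2]
    have hsnd : ∑ k ∈ Finset.Ico j₁ j₂, (dd n k (t k)).2 = 0 := by
      rw [← Prod.snd_sum, hsum]; rfl
    rw [Finset.sum_congr rfl (fun k hk => congrArg Prod.snd (hconst k hk)),
      Finset.sum_const, Nat.card_Ico, nsmul_eq_mul] at hsnd
    split_ifs at hsnd <;> omega
  intro j₁ h₁ j₂ h₂ heq
  rcases lt_trichotomy j₁ j₂ with h | h | h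
  · exact absurd heq (key _ _ h (by omega))
  · exact h
  · exact absurd heq.symm (key _ _ h (by omega))

lemma stepAt_facts {n : ℕ} {c : Config (n * n)}
    (hB : ∀ i < n * n, BB n i (c.st i)) (hP : ∀ j < n * n, c.pos j = SS n c.st j)
    {i : ℕ} (hi : i < n * n) (hne : c.st i ≠ 0) :
    i + 1 < n * n ∧ BB n i (nextSt c i i) ∧
      delta c i = dd n i (nextSt c i i) - dd n i (c.st i) := by
  have hn : 0 < n := by
    rcases Nat.eq_zero_or_pos n with h | h
    · subst h; omega
    · exact h
  have hBi := hB i hi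
  have hmod : i % n ≠ n - 1 := by
    rcases BB_cases hBi with ⟨h, h0⟩ | ⟨h, _⟩ | ⟨h, _⟩
    · exact absurd h0 hne
    · exact h
    · exact h
  have hi1 : i + 1 < n * n := by
    rcases Nat.lt_or_ge (i + 1) (n * n) with h | h
    · exact h
    · exfalso
      have he : i + 1 = n * n := by omega
      have hd : (i + 1) % n = 0 := by rw [he, Nat.mul_mod_right]
      have := (succ_div_mod_of_ne hn hmod).2
      have := Nat.mod_lt i hn
      omega
  have hdir : dir c i = dd n i (c.st i) := by
    unfold dir
    rw [hP (i + 1) hi1, hP i (by omega), SS_succ]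
    exact add_sub_cancel_left _ _
  have hnext : nextSt c i i = if 0 < c.st i then c.st i - 1 else c.st i + 1 := by
    simp [nextSt]
  rcases BB_cases hBi with ⟨_, h0⟩ | ⟨h1, h2, (h3 | h3)⟩ | ⟨h1, h2, (h3 | h3 | h3)⟩
  · exact absurd h0 hne
  · exact absurd h3 hne
  · refine ⟨hi1, ?_, ?_⟩
    · rw [hnext, h3]; norm_num [BB, h1, h2]
    · unfold delta
      rw [hdir, hnext, h3]
      norm_num [dd, h1, h2, rot, Prod.ext_iff]
  · exact absurd h3 hne
  · refine ⟨hi1, ?_, ?_⟩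
    · rw [hnext, h3]; norm_num [BB, h1, h2]
    · unfold delta
      rw [hdir, hnext, h3]
      norm_num [dd, h1, h2, rotInv, Prod.ext_iff]
  · refine ⟨hi1, ?_, ?_⟩
    · rw [hnext, h3]; norm_num [BB, h1, h2]
    · unfold delta
      rw [hdir, hnext, h3]
      norm_num [dd, h1, h2, rotInv, Prod.ext_iff]

lemma nextPos_eq {n : ℕ} {c : Config (n * n)}
    (hB : ∀ i < n * n, BB n i (c.st i)) (hP : ∀ j < n * n, c.pos j = SS n c.st j)
    {i : ℕ} (hi : i < n * n) (hne : c.st i ≠ 0) :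
    ∀ j < n * n, nextPos c i j = SS n (nextSt c i) j := by
  intro j hj
  obtain ⟨hi1, hBnew, hdelta⟩ := stepAt_facts hB hP hi hne
  have hpoint : ∀ k ∈ Finset.range j, dd n k (nextSt c i k) =
      dd n k (c.st k) + if k = i then dd n i (nextSt c i i) - dd n i (c.st i) else 0 := by
    intro k _
    by_cases hki : k = i
    · subst hki; simp
    · simp [nextSt, hki]
  have e1 : nextPos c i j = c.pos j + if i < j then delta c i else 0 := by
    unfold nextPos; split_ifs <;> simp
  rw [e1, hP j hj, hdelta]
  rw [SS, SS, Finset.sum_congr rfl hpoint, Finset.sum_add_distrib, Finset.sum_ite_eq']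
  congr 1
  simp [Finset.mem_range]

lemma inv_step {n : ℕ} {c c' : Config (n * n)} (h : Step c c')
    (hB : ∀ i < n * n, BB n i (c.st i)) (hP : ∀ j < n * n, c.pos j = SS n c.st j) :
    (∀ i < n * n, BB n i (c'.st i)) ∧ (∀ j < n * n, c'.pos j = SS n c'.st j) := by
  obtain ⟨i, hi, hne, hst, hpos⟩ := h
  obtain ⟨hi1, hBnew, _⟩ := stepAt_facts hB hP hi hne
  constructor
  · intro j hj
    rw [hst j hj]
    by_cases hji : j = i
    · subst hji; exact hBnew
    · simpa [nextSt, hji] using hB j hj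
  · intro j hj
    rw [hpos j hj, nextPos_eq hB hP hi hne j hj]
    exact Finset.sum_congr rfl fun k hk =>
      congrArg (dd n k) (hst k (lt_trans (Finset.mem_range.mp hk) hj)).symm

lemma applicable_of_ne {n : ℕ} {c : Config (n * n)}
    (hB : ∀ i < n * n, BB n i (c.st i)) (hP : ∀ j < n * n, c.pos j = SS n c.st j)
    {i : ℕ} (hi : i < n * n) (hne : c.st i ≠ 0) : Applicable c i := by
  obtain ⟨hi1, hBnew, _⟩ := stepAt_facts hB hP hi hne
  have hSS := nextPos_eq hB hP hi hne
  have hBall : ∀ k < n * n, BB n k (nextSt c i k) := by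
    intro k hk
    by_cases hki : k = i
    · subst hki; exact hBnew
    · simpa [nextSt, hki] using hB k hk
  refine ⟨⟨nextSt c i, nextPos c i, ?_, ?_, ?_⟩, hi, hne, fun j _ => rfl, fun j _ => rfl⟩
  · have : ¬ i < 0 := Nat.not_lt_zero i
    simp [nextPos, this, c.pos_zero]
  · intro j hj
    rw [hSS (j + 1) hj, hSS j (by omega), SS_succ]
    simpa using dd_mem_unitVecs n j (nextSt c i j)
  · intro j₁ h₁ j₂ h₂ heq
    rw [hSS j₁ h₁, hSS j₂ h₂] at heq
    exact SS_inj hBall j₁ h₁ j₂ h₂ heq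

/-- The target configuration: the fully folded square. -/
def target (n : ℕ) : Config (n * n) where
  st := fun _ => 0
  pos := fun j => SS n (fun _ => 0) j
  pos_zero := by simp [SS]; rfl
  step_unit := by
    intro j _
    show SS n _ (j + 1) - SS n _ j ∈ unitVecs
    rw [SS_succ]
    simpa using dd_mem_unitVecs n j 0
  pos_inj := fun j₁ h₁ j₂ h₂ heq => SS_inj (fun k _ => BB_zero n k) j₁ h₁ j₂ h₂ heq

/-- Termination measure. -/
def meas {n : ℕ} (c : Config n) : ℕ := ∑ i ∈ Finset.range n, (c.st i).natAbs

lemma meas_lt {n : ℕ} {c c' : Config n} (h : Step c c') : meas c' < meas c := by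
  obtain ⟨i, hi, hne, hst, hpos⟩ := h
  apply Finset.sum_lt_sum
  · intro j hj
    rw [hst j (Finset.mem_range.mp hj)]
    by_cases hji : j = i
    · subst hji
      simp only [nextSt, if_pos rfl]
      split_ifs <;> omega
    · simp [nextSt, hji]
  · refine ⟨i, Finset.mem_range.mpr hi, ?_⟩
    rw [hst i hi]
    simp only [nextSt, if_pos rfl]
    split_ifs <;> omega

lemma no_infinite {n : ℕ} (c₀ : Config n) :
    ¬ ∃ f : ℕ → Config n, f 0 = c₀ ∧ ∀ k, Step (f k) (f (k + 1)) := by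
  rintro ⟨f, -, hstep⟩
  have key : ∀ k, meas (f k) + k ≤ meas (f 0) := by
    intro k
    induction k with
    | zero => omega
    | succ m ih => have := meas_lt (hstep m); omega
  have := key (meas (f 0) + 1)
  omega

lemma SS_zero_formula {n : ℕ} (hn : 0 < n) (i : ℕ) :
    SS n (fun _ => 0) i =
      (((i / n : ℕ) : ℤ),
        if (i / n) % 2 = 0 then ((i % n : ℕ) : ℤ) else (n : ℤ) - 1 - ((i % n : ℕ) : ℤ)) := by
  induction i with
  | zero => simp [SS, Nat.zero_div, Nat.zero_mod, Prod.ext_iff]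
  | succ m ih =>
    rw [SS_succ, ih]
    have hmn : m % n < n := Nat.mod_lt _ hn
    have hc1 : ((n - 1 : ℕ) : ℤ) = (n : ℤ) - 1 := by omega
    by_cases hm : m % n = n - 1
    · obtain ⟨hdiv, hmod⟩ := succ_div_mod_of_eq hn hm
      have hdd : dd n m 0 = (1, 0) := by simp [dd, hm]
      rw [hdiv, hmod, hdd, Prod.mk_add_mk, Prod.ext_iff, hm, hc1]
      by_cases hq : (m / n) % 2 = 0
      · have hq1 : ¬ (m / n + 1) % 2 = 0 := by omega
        rw [if_pos hq, if_neg hq1]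
        constructor
        · push_cast; ring
        · push_cast; ring
      · have hq1 : (m / n + 1) % 2 = 0 := by omega
        rw [if_neg hq, if_pos hq1]
        constructor
        · push_cast; ring
        · push_cast; ring
    · obtain ⟨hdiv, hmod⟩ := succ_div_mod_of_ne hn hm
      by_cases hq : (m / n) % 2 = 0
      · have hdd : dd n m 0 = (0, 1) := by simp [dd, hm, hq]
        rw [hdiv, hmod, hdd, Prod.mk_add_mk, Prod.ext_iff, if_pos hq, if_pos hq]
        constructor
        · ring
        · push_cast; ring
      · have hdd : dd n m 0 = (0, -1) := by simp [dd, hm, hq]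
        rw [hdiv, hmod, hdd, Prod.mk_add_mk, Prod.ext_iff, if_neg hq, if_neg hq]
        constructor
        · ring
        · push_cast; ring

lemma posSet_target (n : ℕ) :
    posSet (target n) = {q : Pt | 0 ≤ q.1 ∧ q.1 < (n : ℤ) ∧ 0 ≤ q.2 ∧ q.2 < (n : ℤ)} := by
  ext q
  simp only [posSet, target, Set.mem_setOf_eq]
  constructor
  · rintro ⟨i, hi, rfl⟩
    have hn : 0 < n := by
      rcases Nat.eq_zero_or_pos n with h | h
      · subst h; omega
      · exact h
    rw [SS_zero_formula hn]
    have h1 : i / n < n := (Nat.div_lt_iff_lt_mul hn).mpr hi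
    have h2 : i % n < n := Nat.mod_lt _ hn
    have h3 : (0 : ℤ) ≤ ((i % n : ℕ) : ℤ) := Int.natCast_nonneg _
    have h4 : ((i % n : ℕ) : ℤ) < (n : ℤ) := by exact_mod_cast h2
    have h5 : (0 : ℤ) < (n : ℤ) := by exact_mod_cast hn
    refine ⟨?_, ?_, ?_, ?_⟩
    · show (0 : ℤ) ≤ ((i / n : ℕ) : ℤ)
      exact Int.natCast_nonneg _
    · show ((i / n : ℕ) : ℤ) < (n : ℤ)
      exact_mod_cast h1
    · show (0 : ℤ) ≤
        if (i / n) % 2 = 0 then ((i % n : ℕ) : ℤ) else (n : ℤ) - 1 - ((i % n : ℕ) : ℤ)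
      split_ifs <;> omega
    · show (if (i / n) % 2 = 0 then ((i % n : ℕ) : ℤ)
          else (n : ℤ) - 1 - ((i % n : ℕ) : ℤ)) < (n : ℤ)
      split_ifs <;> omega
  · rintro ⟨h1, h2, h3, h4⟩
    have hn : 0 < n := by
      have : (0 : ℤ) < n := lt_of_le_of_lt h1 h2
      exact_mod_cast this
    obtain ⟨A, hA'⟩ : ∃ A : ℕ, q.1 = (A : ℤ) := ⟨q.1.toNat, (Int.toNat_of_nonneg h1).symm⟩
    obtain ⟨B, hB'⟩ : ∃ B : ℕ, q.2 = (B : ℤ) := ⟨q.2.toNat, (Int.toNat_of_nonneg h3).symm⟩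
    have hA : A < n := by rw [hA'] at h2; exact_mod_cast h2
    have hB : B < n := by rw [hB'] at h4; exact_mod_cast h4
    set r : ℕ := if A % 2 = 0 then B else n - 1 - B with hr
    have hrn : r < n := by rw [hr]; split_ifs <;> omega
    have hdiv : (A * n + r) / n = A := by
      have e : A * n + r = r + n * A := by ring
      rw [e, Nat.add_mul_div_left _ _ hn, Nat.div_eq_of_lt hrn, Nat.zero_add]
    have hmod : (A * n + r) % n = r := by
      have e : A * n + r = r + n * A := by ring
      rw [e, Nat.add_mul_mod_self_left, Nat.mod_eq_of_lt hrn]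
    refine ⟨A * n + r, ?_, ?_⟩
    · have h5 : (A + 1) * n ≤ n * n := Nat.mul_le_mul_right _ (by omega)
      have h6 : (A + 1) * n = A * n + n := by ring
      rw [h6] at h5
      omega
    · rw [SS_zero_formula hn, hdiv, hmod, hr]
      have : q = (q.1, q.2) := rfl
      rw [this, hA', hB']
      by_cases hA2 : A % 2 = 0
      · simp [hA2]
      · simp only [hA2, if_false]
        refine Prod.ext rfl ?_
        omega

/-- For every `n`, the `n × n` square is foldable with zero error: some
Turning Machine with `n²` monomers computes a target configuration with all states `0` whose
set of positions is exactly the `n × n` square. -/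
theorem square_foldable (n : ℕ) :
    ∃ s₀ : ℕ → ℤ, ∃ ct : Config (n * n), Computes (mkInit (n * n) s₀) ct ∧
      (∀ i < n * n, ct.st i = 0) ∧
      posSet ct = {q : Pt | 0 ≤ q.1 ∧ q.1 < (n : ℤ) ∧ 0 ≤ q.2 ∧ q.2 < (n : ℤ)} := by
  refine ⟨sqInit n, target n, ⟨no_infinite _, ?_⟩, fun i _ => rfl, posSet_target n⟩
  have hInitB : ∀ i < n * n, BB n i ((mkInit (n * n) (sqInit n)).st i) := by
    intro i _
    show BB n i (sqInit n i)
    unfold BB sqInit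
    split_ifs <;> simp
  have hdd_init : ∀ k, dd n k (sqInit n k) = (1, 0) := by
    intro k
    by_cases h1 : k % n = n - 1
    · simp [dd, sqInit, h1]
    · by_cases h2 : (k / n) % 2 = 0 <;> simp [dd, sqInit, h1, h2]
  have hInitP : ∀ j < n * n, (mkInit (n * n) (sqInit n)).pos j =
      SS n (mkInit (n * n) (sqInit n)).st j := by
    intro j hj
    clear hj
    show ((j : ℤ), (0 : ℤ)) = SS n (sqInit n) j
    induction j with
    | zero => simp [SS]
    | succ m ih =>
      rw [SS_succ, ← ih, hdd_init m]
      simp [Prod.ext_iff]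
  intro c hreach
  have hinv : (∀ i < n * n, BB n i (c.st i)) ∧ (∀ j < n * n, c.pos j = SS n c.st j) := by
    induction hreach with
    | refl => exact ⟨hInitB, hInitP⟩
    | tail _ hbc ih => exact inv_step hbc ih.1 ih.2
  intro hterm i hi
  have hzero : ∀ k < n * n, c.st k = 0 := by
    intro k hk
    by_contra hne
    exact hterm k (applicable_of_ne hinv.1 hinv.2 hk hne)
  refine ⟨hzero i hi, ?_⟩
  rw [hinv.2 i hi]
  show SS n c.st i = SS n (fun _ => 0) i
  exact Finset.sum_congr rfl fun k hk =>
    congrArg (dd n k) (hzero k (lt_trans (Finset.mem_range.mp hk) hi))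

end TuringMachineFolding
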